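/- Let n, r, d, a be positive integers, s := d²n − ra, k := gcd(r,d), and (r', d') integers with rd' − r'd = −k and 0 ≤ r' < r. Assume dn > max{(1/(2k))(r' + (k−1)r/k)·2s, s}. Then: for any integers r₁, d₁, a₁ with a₁ > 0, 0 < d₁ < d, d₁/a₁ ≤ d/a, and 2d₁²n − 2r₁a₁ ≥ 0 (i.e. ⟨(a₁, ±d₁H, r₁)²⟩ ≥ 0), one has r₁ ≤ rd₁/d. -/

import Mathlib

set_option maxHeartbeats 800000

/-- Proposition 5.7(1): on an abelian surface with `NS(X) = ℤH`,
`(H²) = 2n`, set `s = d²n − ra`, `k = gcd(r,d)`, and take `(r',d')` with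
`rd' − r'd = −k`, `0 ≤ r' < r`.  If
`dn > max{(1/(2k))(r' + (k−1)r/k)·2s, s}`, then any stable-type Mukai
vector `(a₁, ±d₁H, r₁)` (i.e. with `2d₁²n − 2r₁a₁ ≥ 0`) with `a₁ > 0`,
`0 < d₁ < d` and `d₁/a₁ ≤ d/a` satisfies `r₁ ≤ rd₁/d`. -/
theorem key_special (n r d a : ℤ) (hn : 0 < n) (hr : 0 < r) (hd : 0 < d)
    (ha : 0 < a) (s : ℤ) (hs : s = d ^ 2 * n - r * a)
    (k : ℤ) (hk : k = Int.gcd r d)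
    (r' d' : ℤ) (hrd : r * d' - r' * d = -k) (hr'0 : 0 ≤ r') (hr' : r' < r)
    (hbig : ((d * n : ℤ) : ℚ) >
      max ((1 / (2 * (k : ℚ))) * ((r' : ℚ) + ((k : ℚ) - 1) * (r : ℚ) / (k : ℚ))
        * (2 * (s : ℚ))) ((s : ℚ))) :
    ∀ r₁ d₁ a₁ : ℤ, 0 < a₁ → 0 < d₁ → d₁ < d →
      (d₁ : ℚ) / (a₁ : ℚ) ≤ (d : ℚ) / (a : ℚ) →
      0 ≤ 2 * d₁ ^ 2 * n - 2 * r₁ * a₁ →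
      (r₁ : ℚ) ≤ (r : ℚ) * (d₁ : ℚ) / (d : ℚ) := by
  intro r₁ d₁ a₁ ha₁ hd₁0 hd₁d hratio hmukai
  obtain ⟨hbA, hbB⟩ := max_lt_iff.mp hbig
  have hdns : s < d * n := by exact_mod_cast hbB
  have hk0 : 0 < k := by
    rw [hk]
    exact_mod_cast Int.gcd_pos_iff.mpr (Or.inl hr.ne')
  have hkr : k ∣ r := hk ▸ Int.gcd_dvd_left r d
  have hkd : k ∣ d := hk ▸ Int.gcd_dvd_right r d
  obtain ⟨r₀, hr₀⟩ := hkr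
  obtain ⟨d₀, hd₀⟩ := hkd
  have hr₀pos : 0 < r₀ := by
    rcases le_or_gt r₀ 0 with h | h
    · nlinarith
    · exact h
  -- integer form of the first part of hbig
  have hkQ : (0:ℚ) < (k:ℚ) := by exact_mod_cast hk0
  have h2 : (r' + (k - 1) * r₀) * s < d * n * k := by
    have hrQ : (r:ℚ) = (k:ℚ) * (r₀:ℚ) := by exact_mod_cast hr₀
    have heq : (1 / (2 * (k : ℚ))) * ((r' : ℚ) + ((k : ℚ) - 1) * (r : ℚ) / (k : ℚ))
        * (2 * (s : ℚ)) = ((r':ℚ) + ((k:ℚ) - 1) * (r₀:ℚ)) * (s:ℚ) / (k:ℚ) := by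
      rw [hrQ]
      field_simp
    rw [heq] at hbA
    have := (div_lt_iff₀ hkQ).mp hbA
    push_cast at this
    exact_mod_cast this
  -- ratio in integer form
  have hratio' : d₁ * a ≤ d * a₁ := by
    rw [div_le_div_iff₀ (by exact_mod_cast ha₁) (by exact_mod_cast ha)] at hratio
    exact_mod_cast hratio
  rcases le_or_gt r₁ 0 with hr₁0 | hr₁pos
  · have h0 : (r₁:ℚ) ≤ 0 := by exact_mod_cast hr₁0
    have hpos : (0:ℚ) < (r:ℚ) * (d₁:ℚ) / (d:ℚ) := by
      apply div_pos
      · exact mul_pos (by exact_mod_cast hr) (by exact_mod_cast hd₁0)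
      · exact_mod_cast hd
    linarith
  -- key inequality : 0 ≤ d n (r d₁ - r₁ d) + r₁ s
  have h3 : r₁ * a ≤ d * d₁ * n := by
    have h1 : r₁ * (d₁ * a) ≤ r₁ * (d * a₁) :=
      mul_le_mul_of_nonneg_left hratio' hr₁pos.le
    have h2' : d₁ * 0 ≤ d₁ * (d * d₁ * n - r₁ * a) := by
      have := mul_nonneg hd.le hmukai
      nlinarith [this, h1]
    have h2'' := le_of_mul_le_mul_left h2' hd₁0
    linarith
  have key : 0 ≤ d * n * (r * d₁ - r₁ * d) + r₁ * s := by
    have hf1 : 0 ≤ r * (d * d₁ * n - r₁ * a) := mul_nonneg hr.le (sub_nonneg.mpr h3)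
    have hss : r₁ * s = r₁ * (d ^ 2 * n) - r₁ * (r * a) := by
      linear_combination r₁ * hs
    nlinarith [hf1, hss]
  rcases le_or_gt 0 (r * d₁ - r₁ * d) with hsign | hsign
  · -- conclude
    rw [le_div_iff₀ (by exact_mod_cast hd : (0:ℚ) < (d:ℚ))]
    have : r₁ * d ≤ r * d₁ := by linarith
    exact_mod_cast this
  · exfalso
    have hkdvd : k ∣ r * d₁ - r₁ * d :=
      dvd_sub ((hk ▸ Int.gcd_dvd_left r d).mul_right d₁) ((hk ▸ Int.gcd_dvd_right r d).mul_left r₁)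
    obtain ⟨m, hm⟩ := hkdvd
    have hm0 : 0 < -m := by
      rcases le_or_gt 0 m with h | h
      · nlinarith
      · linarith
    have hm' : r₁ * d - r * d₁ = k * (-m) := by linarith [hm]
    have keyB : k * (-m) * (d * n) ≤ r₁ * s := by
      have heq : d * n * (r * d₁ - r₁ * d) = -(k * (-m) * (d * n)) := by
        linear_combination (-(d * n)) * hm'
      linarith [key, heq]
    -- s must be positive
    have hspos : 0 < s := by
      rcases le_or_gt s 0 with h | h
      · have p1 : 0 < k * (-m) * (d * n) := mul_pos (mul_pos hk0 hm0) (mul_pos hd hn)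
        have p2 : r₁ * s ≤ 0 := mul_nonpos_of_nonneg_of_nonpos hr₁pos.le h
        linarith
      · exact h
    -- r₁ < r
    have hr₁r : r₁ < r := by
      by_contra hc
      push_neg at hc
      have h4 : r₁ * (d - d₁) ≤ k * (-m) := by
        have := mul_nonneg (sub_nonneg.mpr hc) hd₁0.le
        nlinarith [this, hm']
      have h5 : r₁ ≤ k * (-m) := by
        have := mul_nonneg hr₁pos.le (by linarith : (0:ℤ) ≤ d - d₁ - 1)
        nlinarith [this, h4]
      have p3 : 0 ≤ (k * (-m) - r₁) * (d * n) :=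
        mul_nonneg (sub_nonneg.mpr h5) (mul_pos hd hn).le
      have p4 : 0 < r₁ * (d * n - s) := mul_pos hr₁pos (sub_pos.mpr hdns)
      nlinarith [keyB, p3, p4]
    -- cancellation by k
    have hcc : r₀ * d₁ - r₁ * d₀ = -(-m) := by
      have hkk : k * (r₀ * d₁ - r₁ * d₀) = k * (-(-m)) := by
        calc k * (r₀ * d₁ - r₁ * d₀) = r * d₁ - r₁ * d := by rw [hr₀, hd₀]; ring
        _ = k * (-(-m)) := by linarith [hm']
      exact mul_left_cancel₀ hk0.ne' hkk
    have hcc' : r₀ * d' - r' * d₀ = -1 := by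
      have hkk : k * (r₀ * d' - r' * d₀) = k * (-1) := by
        calc k * (r₀ * d' - r' * d₀) = r * d' - r' * d := by rw [hr₀, hd₀]; ring
        _ = k * (-1) := by linarith [hrd]
      exact mul_left_cancel₀ hk0.ne' hkk
    have hcop : IsCoprime r₀ d₀ := ⟨-d', r', by linarith [hcc']⟩
    have hdvd : r₀ ∣ d₀ * (r₁ - (-m) * r') := by
      refine ⟨d₁ - (-m) * d', ?_⟩
      linear_combination (-1 : ℤ) * hcc + (-m) * hcc'
    have hdvd' : r₀ ∣ r₁ - (-m) * r' := hcop.dvd_of_dvd_mul_left hdvd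
    obtain ⟨t, ht⟩ := hdvd'
    -- t ≤ k - 1
    have htk : t ≤ k - 1 := by
      have h6 : r₀ * t < r₀ * k := by
        have := mul_nonneg hm0.le hr'0
        nlinarith [ht, hr₁r, hr₀, this]
      have := lt_of_mul_lt_mul_left h6 hr₀pos.le
      linarith
    -- final contradiction
    have hts : r₁ * s = (-m) * r' * s + r₀ * t * s := by
      linear_combination s * ht
    have f1 : 0 ≤ (r₀ * (k - 1) - r₀ * t) * s := by
      have h7 : r₀ * t ≤ r₀ * (k - 1) := mul_le_mul_of_nonneg_left htk hr₀pos.le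
      exact mul_nonneg (by linarith) hspos.le
    have c1 : r₁ * s ≤ ((-m) * r' + r₀ * (k - 1)) * s := by nlinarith [f1, hts]
    have c2 : ((-m) * r' + r₀ * (k - 1)) * s ≤ (-m) * ((r' + (k - 1) * r₀) * s) := by
      have h8 : 0 ≤ ((-m) - 1) * ((k - 1) * (r₀ * s)) :=
        mul_nonneg (by linarith) (mul_nonneg (by linarith) (mul_nonneg hr₀pos.le hspos.le))
      nlinarith [h8]
    have c3 : (-m) * ((r' + (k - 1) * r₀) * s) < (-m) * (d * n * k) :=
      mul_lt_mul_of_pos_left h2 hm0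
    linarith [keyB, c1, c2, c3]
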